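/- arXiv:2503.03019 — 16 statements merged into one kernel-verified Lean document; each statement's English description precedes it below -/
import Mathlib

section
/- For every time step τ with 0 < τ ≤ 2, every mesh size h > 0, and every η ∈ (0,1], one has Q_c(τ,h,η) := exp(−8τη/h²) + (h²(1−η)/(4η))·(exp(−4τη/h²) − 1)² ≤ 1. (This is the stability of the ETD-RK1 time discretization of the central finite-difference scheme for the dimensionless advection–diffusion equation: the squared modulus of the Fourier growth factor is at most 1.) -/
private lemma key_aux (x : ℝ) (hx : 0 ≤ x) :
    2 * Real.exp x - 2 ≤ x * Real.exp x + x := by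
  have mono : MonotoneOn (fun y : ℝ => y * Real.exp y + y - 2 * Real.exp y + 2)
      (Set.Ici 0) := by
    apply monotoneOn_of_deriv_nonneg (convex_Ici 0)
    · fun_prop
    · fun_prop
    · intro y _
      have hd : HasDerivAt (fun y : ℝ => y * Real.exp y + y - 2 * Real.exp y + 2)
          ((Real.exp y + y * Real.exp y) + 1 - 2 * Real.exp y + 0) y := by
        exact ((((Real.hasDerivAt_exp y).const_mul y).add_const 1
          |>.congr_deriv rfl) |> fun _ => by
            have h1 := (hasDerivAt_id y).mul (Real.hasDerivAt_exp y)
            have h2 := (h1.add (hasDerivAt_id y)).sub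
              ((Real.hasDerivAt_exp y).const_mul 2)
            have h3 := h2.add_const 2
            simpa using h3)
      rw [hd.deriv]
      have h4 : (1 - y) * Real.exp y ≤ 1 := by
        have h5 : 1 - y ≤ Real.exp (-y) := by
          have := Real.add_one_le_exp (-y); linarith
        calc (1 - y) * Real.exp y ≤ Real.exp (-y) * Real.exp y :=
              mul_le_mul_of_nonneg_right h5 (Real.exp_pos y).le
          _ = 1 := by rw [← Real.exp_add]; simp
      nlinarith
  have h0 : (0 : ℝ) ∈ Set.Ici (0 : ℝ) := Set.self_mem_Ici
  have hmem : x ∈ Set.Ici (0 : ℝ) := hx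
  have := mono h0 hmem hx
  simp only [Real.exp_zero] at this
  nlinarith [this]

/-- Stability of the ETD-RK1 time discretization of the central finite-difference
scheme for the dimensionless advection–diffusion equation `u_t + u_x = u_{xx}`:
for every time step `0 < τ ≤ 2`, mesh size `h > 0`, and `η ∈ (0,1]`, the squared
modulus of the Fourier growth factor
`Q_c(τ,h,η) = exp(−8τη/h²) + (h²(1−η)/(4η))·(exp(−4τη/h²) − 1)²` is at most 1. -/
theorem etdrk1_central_stability
    (τ h η : ℝ) (hτ0 : 0 < τ) (hτ2 : τ ≤ 2) (hh : 0 < h)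
    (hη0 : 0 < η) (hη1 : η ≤ 1) :
    Real.exp (-8 * τ * η / h ^ 2) +
      (h ^ 2 * (1 - η) / (4 * η)) * (Real.exp (-4 * τ * η / h ^ 2) - 1) ^ 2 ≤ 1 := by
  have hh2 : (0:ℝ) < h ^ 2 := by positivity
  set x : ℝ := 4 * τ * η / h ^ 2 with hxdef
  have hx : 0 < x := by positivity
  set E : ℝ := Real.exp (-x) with hEdef
  have hE0 : 0 < E := Real.exp_pos _
  have hE1 : E ≤ 1 := Real.exp_le_one_iff.mpr (by linarith)
  -- rewrite the exponentials
  have e1 : Real.exp (-4 * τ * η / h ^ 2) = E := by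
    rw [hEdef]; congr 1; rw [hxdef]; ring
  have e2 : Real.exp (-8 * τ * η / h ^ 2) = E ^ 2 := by
    rw [hEdef, ← Real.exp_nat_mul]; congr 1; rw [hxdef]; push_cast; ring
  -- rewrite the coefficient
  have hc : h ^ 2 * (1 - η) / (4 * η) = τ * (1 - η) / x := by
    rw [hxdef]; field_simp
  rw [e1, e2, hc]
  -- key inequality: 2 - 2E ≤ x (1 + E)
  have hkey : 2 - 2 * E ≤ x * (1 + E) := by
    have h1 := key_aux x hx.le
    have h2 : E * Real.exp x = 1 := by
      rw [hEdef, ← Real.exp_add]; simp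
    nlinarith [Real.exp_pos x, mul_le_mul_of_nonneg_right h1 hE0.le]
  have hτη : τ * (1 - η) ≤ 2 := by nlinarith
  have hτη0 : 0 ≤ τ * (1 - η) := by nlinarith
  rw [div_mul_eq_mul_div]
  have hfinal : τ * (1 - η) * (E - 1) ^ 2 / x ≤ 1 - E ^ 2 := by
    rw [div_le_iff₀ hx]
    nlinarith [sq_nonneg (E - 1), mul_le_mul_of_nonneg_right hkey (sub_nonneg.mpr hE1),
      mul_le_mul_of_nonneg_right hτη (sq_nonneg (E - 1))]
  linarith
end

section
/- For every τ with 0 < τ ≤ 2 and every h > 0, the function η ↦ Q_c(τ,h,η) is nonincreasing on (0,1]: if 0 < η₁ ≤ η₂ ≤ 1 then Q_c(τ,h,η₂) ≤ Q_c(τ,h,η₁). -/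
private lemma etdrk1_aux_antitone (τ : ℝ) (hτ0 : 0 < τ) (hτ2 : τ ≤ 2) :
    AntitoneOn (fun x : ℝ => Real.exp (-2 * x) + τ * (1 - Real.exp (-x)) ^ 2 / x)
      (Set.Ioi 0) := by
  have hd : ∀ x ∈ Set.Ioi (0:ℝ), HasDerivAt
      (fun x : ℝ => Real.exp (-2 * x) + τ * (1 - Real.exp (-x)) ^ 2 / x)
      (Real.exp (-2 * x) * (-2) +
        ((τ * (2 * (1 - Real.exp (-x)) ^ 1 * Real.exp (-x))) * x
          - τ * (1 - Real.exp (-x)) ^ 2 * 1) / x ^ 2) x := by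
    intro x hx
    have hxne : x ≠ 0 := ne_of_gt hx
    have h1 : HasDerivAt (fun x : ℝ => Real.exp (-2 * x)) (Real.exp (-2 * x) * (-2)) x := by
      have : HasDerivAt (fun x : ℝ => -2 * x) (-2) x := by
        simpa using (hasDerivAt_id x).const_mul (-2)
      exact this.exp
    have h2 : HasDerivAt (fun x : ℝ => 1 - Real.exp (-x)) (Real.exp (-x)) x := by
      have hneg : HasDerivAt (fun x : ℝ => Real.exp (-x)) (Real.exp (-x) * (-1)) x := by
        have : HasDerivAt (fun x : ℝ => -x) (-1) x := by
          simpa using (hasDerivAt_id x).const_mul (-1)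
        exact this.exp
      have := hneg.const_sub 1
      simpa using this
    have h3 : HasDerivAt (fun x : ℝ => τ * (1 - Real.exp (-x)) ^ 2)
        (τ * (2 * (1 - Real.exp (-x)) ^ 1 * Real.exp (-x))) x := (h2.pow 2).const_mul τ
    exact h1.add (h3.div (hasDerivAt_id x) hxne)
  apply AntitoneOn.mono (s := Set.Ioi (0:ℝ)) ?_ le_rfl
  apply antitoneOn_of_deriv_nonpos (convex_Ioi 0)
  · exact fun x hx => ((hd x hx).differentiableAt).continuousAt.continuousWithinAt
  · rw [interior_Ioi]
    exact fun x hx => ((hd x hx).differentiableAt).differentiableWithinAt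
  · rw [interior_Ioi]
    intro x hx
    rw [(hd x hx).deriv]
    have hx0 : (0:ℝ) < x := hx
    set e := Real.exp (-x) with he
    have he2 : Real.exp (-2 * x) = e ^ 2 := by
      rw [he, sq, ← Real.exp_add]; ring_nf
    have he0 : 0 < e := Real.exp_pos _
    have he1 : e ≤ 1 := by
      rw [he]; exact Real.exp_le_one_iff.mpr (by linarith)
    rw [he2]
    have hx2 : (0:ℝ) < x ^ 2 := by positivity
    have hdiv : ((τ * (2 * (1 - e) ^ 1 * e)) * x - τ * (1 - e) ^ 2 * 1) / x ^ 2
        ≤ 2 * e ^ 2 := by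
      rw [div_le_iff₀ hx2]
      nlinarith [mul_nonneg hτ0.le (sq_nonneg (x * e - (1 - e))),
        mul_nonneg (sub_nonneg.mpr hτ2) (mul_nonneg (sq_nonneg x) (sq_nonneg e))]
    nlinarith [hdiv]

/-- For `0 < τ ≤ 2` and `h > 0`, the squared growth-factor modulus
`Q_c(τ,h,η) = exp(−8τη/h²) + (h²(1−η)/(4η))·(exp(−4τη/h²) − 1)²` of the ETD-RK1
central finite-difference scheme is nonincreasing in `η` on `(0,1]`. -/
theorem etdrk1_central_Q_antitone
    (τ h : ℝ) (hτ0 : 0 < τ) (hτ2 : τ ≤ 2) (hh : 0 < h) :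
    ∀ η₁ η₂ : ℝ, 0 < η₁ → η₁ ≤ η₂ → η₂ ≤ 1 →
      Real.exp (-8 * τ * η₂ / h ^ 2) +
          (h ^ 2 * (1 - η₂) / (4 * η₂)) * (Real.exp (-4 * τ * η₂ / h ^ 2) - 1) ^ 2 ≤
        Real.exp (-8 * τ * η₁ / h ^ 2) +
          (h ^ 2 * (1 - η₁) / (4 * η₁)) * (Real.exp (-4 * τ * η₁ / h ^ 2) - 1) ^ 2 := by
  intro η₁ η₂ hη₁ h12 hη₂1
  have hη₂ : 0 < η₂ := lt_of_lt_of_le hη₁ h12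
  set x₁ : ℝ := 4 * τ * η₁ / h ^ 2 with hx₁def
  set x₂ : ℝ := 4 * τ * η₂ / h ^ 2 with hx₂def
  have hx₁ : 0 < x₁ := by positivity
  have hx₂ : 0 < x₂ := by positivity
  have hle : x₁ ≤ x₂ := by
    apply div_le_div_of_nonneg_right ?_ (by positivity) |>.trans_eq rfl
    nlinarith
  -- F antitone
  have hF := etdrk1_aux_antitone τ hτ0 hτ2 (Set.mem_Ioi.mpr hx₁) (Set.mem_Ioi.mpr hx₂) hle
  simp only at hF
  -- G monotone
  have hexp : Real.exp (-x₂) ≤ Real.exp (-x₁) := Real.exp_le_exp.mpr (by linarith)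
  have hone₁ : Real.exp (-x₁) ≤ 1 := Real.exp_le_one_iff.mpr (by linarith)
  have hG : (1 - Real.exp (-x₁)) ^ 2 ≤ (1 - Real.exp (-x₂)) ^ 2 := by
    apply pow_le_pow_left₀ (by linarith) (by linarith)
  -- rewrite Q in terms of F and G
  have hrw : ∀ η : ℝ, 0 < η →
      Real.exp (-8 * τ * η / h ^ 2) +
        (h ^ 2 * (1 - η) / (4 * η)) * (Real.exp (-4 * τ * η / h ^ 2) - 1) ^ 2 =
      (Real.exp (-2 * (4 * τ * η / h ^ 2)) +
        τ * (1 - Real.exp (-(4 * τ * η / h ^ 2))) ^ 2 / (4 * τ * η / h ^ 2))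
      - (h ^ 2 / 4) * (1 - Real.exp (-(4 * τ * η / h ^ 2))) ^ 2 := by
    intro η hη
    have e1 : -8 * τ * η / h ^ 2 = -2 * (4 * τ * η / h ^ 2) := by ring
    have e2 : -4 * τ * η / h ^ 2 = -(4 * τ * η / h ^ 2) := by ring
    rw [e1, e2]
    have hsq : (Real.exp (-(4 * τ * η / h ^ 2)) - 1) ^ 2
        = (1 - Real.exp (-(4 * τ * η / h ^ 2))) ^ 2 := by ring
    rw [hsq]
    have hcoef : h ^ 2 * (1 - η) / (4 * η)
        = τ / (4 * τ * η / h ^ 2) - h ^ 2 / 4 := by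
      field_simp
    rw [hcoef]
    ring
  rw [hrw η₁ hη₁, hrw η₂ hη₂]
  rw [← hx₁def, ← hx₂def]
  nlinarith [hG, hF, sq_nonneg h]
end

section
/- For every τ > 2 and every h > 0, there exists η₀ ∈ (0,1] such that Q_c(τ,h,η₀) > 1. Hence the time-step condition τ ≤ 2 is necessary for the growth-factor bound Q_c(τ,h,η) ≤ 1 to hold for all η ∈ (0,1]. -/
open Filter Topology

/-- Necessity of the time-step constraint `τ ≤ 2` for the ETD-RK1 central scheme:
for every `τ > 2` and `h > 0`, there exists `η₀ ∈ (0,1]` with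
`Q_c(τ,h,η₀) = exp(−8τη₀/h²) + (h²(1−η₀)/(4η₀))·(exp(−4τη₀/h²) − 1)² > 1`. -/
theorem etdrk1_central_instability
    (τ h : ℝ) (hτ : 2 < τ) (hh : 0 < h) :
    ∃ η₀ : ℝ, 0 < η₀ ∧ η₀ ≤ 1 ∧
      1 < Real.exp (-8 * τ * η₀ / h ^ 2) +
        (h ^ 2 * (1 - η₀) / (4 * η₀)) * (Real.exp (-4 * τ * η₀ / h ^ 2) - 1) ^ 2 := by
  have hh2 : (0:ℝ) < h ^ 2 := by positivity
  set c : ℝ := τ / h ^ 2 with hc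
  have hτ0 : (0:ℝ) < τ := by linarith
  have hcpos : 0 < c := by positivity
  -- derivatives at 0
  have d1 : HasDerivAt (fun η : ℝ => Real.exp (-8 * τ * η / h ^ 2)) (-8 * c) 0 := by
    have hlin : HasDerivAt (fun η : ℝ => -8 * τ * η / h ^ 2) (-8 * c) 0 := by
      have h0 := (((hasDerivAt_id (0:ℝ)).const_mul (-8 * τ)).div_const (h ^ 2))
      rw [show -8 * c = -8 * τ * 1 / h ^ 2 by rw [hc]; ring]
      exact h0
    simpa using hlin.exp
  have d2 : HasDerivAt (fun η : ℝ => Real.exp (-4 * τ * η / h ^ 2)) (-4 * c) 0 := by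
    have hlin : HasDerivAt (fun η : ℝ => -4 * τ * η / h ^ 2) (-4 * c) 0 := by
      have h0 := (((hasDerivAt_id (0:ℝ)).const_mul (-4 * τ)).div_const (h ^ 2))
      rw [show -4 * c = -4 * τ * 1 / h ^ 2 by rw [hc]; ring]
      exact h0
    simpa using hlin.exp
  have hsub : Set.Ioi (0:ℝ) ⊆ {(0:ℝ)}ᶜ := fun x hx => ne_of_gt hx
  have t1 : Tendsto (fun η : ℝ => (Real.exp (-8 * τ * η / h ^ 2) - 1) / η)
      (𝓝[>] (0:ℝ)) (𝓝 (-8 * c)) := by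
    have := (hasDerivAt_iff_tendsto_slope.mp d1).mono_left (nhdsWithin_mono 0 hsub)
    simpa [slope_fun_def, Function.comp, div_eq_inv_mul] using this
  have t2 : Tendsto (fun η : ℝ => (Real.exp (-4 * τ * η / h ^ 2) - 1) / η)
      (𝓝[>] (0:ℝ)) (𝓝 (-4 * c)) := by
    have := (hasDerivAt_iff_tendsto_slope.mp d2).mono_left (nhdsWithin_mono 0 hsub)
    simpa [slope_fun_def, Function.comp, div_eq_inv_mul] using this
  have t3 : Tendsto (fun η : ℝ => h ^ 2 * (1 - η) / 4) (𝓝[>] (0:ℝ)) (𝓝 (h ^ 2 / 4)) := by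
    have : ContinuousAt (fun η : ℝ => h ^ 2 * (1 - η) / 4) 0 := by fun_prop
    simpa using this.tendsto.mono_left nhdsWithin_le_nhds
  have tG : Tendsto (fun η : ℝ => (Real.exp (-8 * τ * η / h ^ 2) - 1) / η +
        (h ^ 2 * (1 - η) / 4) * ((Real.exp (-4 * τ * η / h ^ 2) - 1) / η) ^ 2)
      (𝓝[>] (0:ℝ)) (𝓝 (-8 * c + (h ^ 2 / 4) * (-4 * c) ^ 2)) :=
    t1.add (t3.mul (t2.pow 2))
  have hLpos : 0 < -8 * c + (h ^ 2 / 4) * (-4 * c) ^ 2 := by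
    have : -8 * c + (h ^ 2 / 4) * (-4 * c) ^ 2 = 4 * c * (h ^ 2 * c - 2) := by ring
    rw [this]
    have hhc : h ^ 2 * c = τ := by rw [hc]; field_simp
    rw [hhc]
    have : 0 < τ - 2 := by linarith
    positivity
  have hev : ∀ᶠ η in 𝓝[>] (0:ℝ),
      0 < (Real.exp (-8 * τ * η / h ^ 2) - 1) / η +
        (h ^ 2 * (1 - η) / 4) * ((Real.exp (-4 * τ * η / h ^ 2) - 1) / η) ^ 2 :=
    tG.eventually (eventually_gt_nhds hLpos)
  have hev2 : ∀ᶠ η in 𝓝[>] (0:ℝ), η ∈ Set.Ioi (0:ℝ) := self_mem_nhdsWithin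
  have hev3 : ∀ᶠ η in 𝓝[>] (0:ℝ), η < 1 :=
    eventually_nhdsWithin_of_eventually_nhds (eventually_lt_nhds one_pos)
  obtain ⟨η₀, hG, hmem, hlt1⟩ := (hev.and (hev2.and hev3)).exists
  refine ⟨η₀, hmem, le_of_lt hlt1, ?_⟩
  have hη0 : 0 < η₀ := hmem
  have hne : η₀ ≠ 0 := ne_of_gt hη0
  have key : Real.exp (-8 * τ * η₀ / h ^ 2) +
        (h ^ 2 * (1 - η₀) / (4 * η₀)) * (Real.exp (-4 * τ * η₀ / h ^ 2) - 1) ^ 2 - 1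
      = η₀ * ((Real.exp (-8 * τ * η₀ / h ^ 2) - 1) / η₀ +
        (h ^ 2 * (1 - η₀) / 4) * ((Real.exp (-4 * τ * η₀ / h ^ 2) - 1) / η₀) ^ 2) := by
    field_simp
    ring
  have : 0 < η₀ * ((Real.exp (-8 * τ * η₀ / h ^ 2) - 1) / η₀ +
        (h ^ 2 * (1 - η₀) / 4) * ((Real.exp (-4 * τ * η₀ / h ^ 2) - 1) / η₀) ^ 2) :=
    mul_pos hη0 hG
  linarith [key ▸ this]
end

section
/- Let a > 0 and d > 0. For every τ with 0 < τ ≤ 2d/a², every h > 0, and every η ∈ (0,1], one has exp(−8dτη/h²) + (a²h²(1−η)/(4d²η))·(exp(−4dτη/h²) − 1)² ≤ 1. (This is the stability of the ETD-RK1 central finite-difference scheme for u_t + a u_x = d u_{xx} under the time-step constraint τ ≤ 2d/a².) -/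
/-- Auxiliary inequality: `2(1 - e^{-x}) ≤ x (1 + e^{-x})` for `x ≥ 0`,
i.e. `tanh(x/2) ≤ x/2`. -/
lemma two_one_sub_exp_le (x : ℝ) (hx : 0 ≤ x) :
    2 * (1 - Real.exp (-x)) ≤ x * (1 + Real.exp (-x)) := by
  set f : ℝ → ℝ := fun t => t * (1 + Real.exp (-t)) - 2 * (1 - Real.exp (-t)) with hf
  have hderiv : ∀ t : ℝ, HasDerivAt f (1 - (1 + t) * Real.exp (-t)) t := by
    intro t
    have he : HasDerivAt (fun t : ℝ => Real.exp (-t)) (-Real.exp (-t)) t := by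
      simpa [Function.comp_def] using (Real.hasDerivAt_exp (-t)).comp t (hasDerivAt_neg t)
    have h1 : HasDerivAt (fun t : ℝ => t * (1 + Real.exp (-t)))
        (1 * (1 + Real.exp (-t)) + t * (0 + -Real.exp (-t))) t :=
      (hasDerivAt_id t).mul ((hasDerivAt_const t 1).add he)
    have h2 : HasDerivAt (fun t : ℝ => 2 * (1 - Real.exp (-t)))
        (2 * (0 - -Real.exp (-t))) t :=
      ((hasDerivAt_const t 1).sub he).const_mul 2
    have := h1.sub h2
    refine this.congr_deriv ?_
    ring
  have hmono : MonotoneOn f (Set.Ici (0 : ℝ)) := by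
    apply monotoneOn_of_deriv_nonneg (convex_Ici 0)
    · exact (Continuous.sub (continuous_id.mul (continuous_const.add
        (Real.continuous_exp.comp continuous_neg)))
        (continuous_const.mul (continuous_const.sub
        (Real.continuous_exp.comp continuous_neg)))).continuousOn
    · intro t _
      exact (hderiv t).differentiableAt.differentiableWithinAt
    · intro t ht
      rw [(hderiv t).deriv]
      have h1' : (1 + t) * Real.exp (-t) ≤ Real.exp t * Real.exp (-t) := by
        apply mul_le_mul_of_nonneg_right _ (Real.exp_nonneg _)
        linarith [Real.add_one_le_exp t]
      rw [← Real.exp_add] at h1'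
      simp at h1'
      linarith
  have h0 : f 0 = 0 := by simp [hf]
  have := hmono (Set.self_mem_Ici) (Set.mem_Ici.mpr hx) hx
  rw [h0] at this
  simp only [hf] at this
  linarith

/-- Stability of the ETD-RK1 central finite-difference scheme for
`u_t + a u_x = d u_{xx}` (`a, d > 0`) under the time-step constraint `τ ≤ 2d/a²`:
for all `h > 0` and `η ∈ (0,1]`,
`exp(−8dτη/h²) + (a²h²(1−η)/(4d²η))·(exp(−4dτη/h²) − 1)² ≤ 1`. -/
theorem etdrk1_central_stability_general
    (a d τ h η : ℝ) (ha : 0 < a) (hd : 0 < d)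
    (hτ0 : 0 < τ) (hτ : τ ≤ 2 * d / a ^ 2) (hh : 0 < h)
    (hη0 : 0 < η) (hη1 : η ≤ 1) :
    Real.exp (-8 * d * τ * η / h ^ 2) +
      (a ^ 2 * h ^ 2 * (1 - η) / (4 * d ^ 2 * η)) *
        (Real.exp (-4 * d * τ * η / h ^ 2) - 1) ^ 2 ≤ 1 := by
  set x : ℝ := 4 * d * τ * η / h ^ 2 with hxdef
  have hx0 : 0 < x := by positivity
  set E : ℝ := Real.exp (-x) with hEdef
  have hE0 : 0 < E := Real.exp_pos _
  have hE1 : E ≤ 1 := by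
    rw [hEdef]
    exact Real.exp_le_one_iff.mpr (by linarith)
  have hsq : Real.exp (-8 * d * τ * η / h ^ 2) = E ^ 2 := by
    rw [hEdef, ← Real.exp_nat_mul]
    congr 1
    rw [hxdef]; ring
  have harg : -4 * d * τ * η / h ^ 2 = -x := by rw [hxdef]; ring
  set c : ℝ := a ^ 2 * h ^ 2 * (1 - η) / (4 * d ^ 2 * η) with hcdef
  have hc : 0 ≤ c := by
    apply div_nonneg _ (by positivity)
    have : 0 ≤ 1 - η := by linarith
    positivity
  have hcx : c * x ≤ 2 := by
    have hne : c * x = a ^ 2 * τ * (1 - η) / d := by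
      rw [hcdef, hxdef]
      field_simp
    rw [hne]
    have hτ' : a ^ 2 * τ ≤ 2 * d := by
      rw [le_div_iff₀ (by positivity : (0:ℝ) < a ^ 2)] at hτ
      linarith
    rw [div_le_iff₀ hd]
    nlinarith [sq_nonneg a, mul_nonneg (mul_nonneg (sq_nonneg a) hτ0.le) hη0.le]
  have hkey : 2 * (1 - E) ≤ x * (1 + E) := two_one_sub_exp_le x hx0.le
  rw [hsq, harg]
  show E ^ 2 + c * (E - 1) ^ 2 ≤ 1
  nlinarith [mul_nonneg (mul_nonneg hc (sub_nonneg.mpr hE1)) (sub_nonneg.mpr hkey),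
    mul_nonneg (mul_nonneg (sub_nonneg.mpr hcx) (sub_nonneg.mpr hE1)) (by linarith : (0:ℝ) ≤ 1 + E)]
end

section
/- For every h > 0, every τ with 0 < τ ≤ max{2, h}, and every η ∈ (0,1], one has Q_u(τ,h,η) := (exp(−4τη/h²) + (h/2)·(exp(−4τη/h²) − 1))² + (h²(1−η)/(4η))·(exp(−4τη/h²) − 1)² ≤ 1. (This is the stability of the ETD-RK1 time discretization of the upwind finite-difference scheme for the dimensionless advection–diffusion equation under the time-step constraint τ ≤ max{2, h}.) -/
open Real

lemma expQ {u : ℝ} (hu0 : 0 ≤ u) (hu1 : u ≤ 1) :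
    1 - u + u^2/2 - u^3/6 - 5*u^4/96 ≤ Real.exp (-u) := by
  have hx : |(-u)| ≤ 1 := by rw [abs_neg, abs_of_nonneg hu0]; exact hu1
  have h := Real.exp_bound hx (n := 4) (by norm_num)
  have hsum : ∑ m ∈ Finset.range 4, (-u) ^ m / m.factorial
      = 1 - u + u^2/2 - u^3/6 := by
    simp [Finset.sum_range_succ, Nat.factorial]
    ring
  rw [hsum] at h
  have habs : |(-u)| = u := by rw [abs_neg, abs_of_nonneg hu0]
  rw [habs] at h
  have := (abs_sub_le_iff.1 h).2
  norm_num [Nat.factorial] at this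
  linarith

lemma Qnonneg {u : ℝ} (hu0 : 0 ≤ u) (hu1 : u ≤ 1) :
    0 ≤ 1 - u + u^2/2 - u^3/6 - 5*u^4/96 := by nlinarith [sq_nonneg u, sq_nonneg (u*u)]

lemma helperR {u : ℝ} (hu0 : 0 ≤ u) (hu1 : u ≤ 1) :
    1 - u ≤ (1+u) * (1 - u + u^2/2 - u^3/6 - 5*u^4/96)^2 := by
  nlinarith [sq_nonneg u, sq_nonneg (u*u), sq_nonneg (u*u*u), mul_nonneg hu0 hu0,
    mul_nonneg (mul_nonneg hu0 hu0) hu0, sq_nonneg (1-u), sq_nonneg (u*(1-u)),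
    mul_nonneg (mul_nonneg (mul_nonneg hu0 hu0) hu0) hu0,
    mul_nonneg (mul_nonneg (mul_nonneg (mul_nonneg hu0 hu0) hu0) hu0) hu0,
    mul_nonneg (sq_nonneg (u*u)) hu0, sq_nonneg (u*u*(1-u)), sq_nonneg (u*u*u*(1-u))]

lemma helperW {u : ℝ} (hu0 : 0 ≤ u) (hu1 : u ≤ 1) :
    0 ≤ 2*u^2 + 2*u*(1 - u + u^2/2 - u^3/6 - 5*u^4/96)^2
      + (1+u^2)*((1 - u + u^2/2 - u^3/6 - 5*u^4/96)^2 - 1) := by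
  nlinarith [sq_nonneg u, sq_nonneg (u*u), sq_nonneg (u*u*u), mul_nonneg hu0 hu0,
    mul_nonneg (mul_nonneg hu0 hu0) hu0, sq_nonneg (1-u), sq_nonneg (u*(1-u)),
    mul_nonneg (mul_nonneg (mul_nonneg hu0 hu0) hu0) hu0,
    mul_nonneg (mul_nonneg (mul_nonneg (mul_nonneg hu0 hu0) hu0) hu0) hu0,
    mul_nonneg (sq_nonneg (u*u)) hu0, sq_nonneg (u*u*(1-u)), sq_nonneg (u*u*u*(1-u))]

-- key inequality in abstract variables
lemma keyaux (h c u q : ℝ) (hh : 0 < h) (hc1 : 1 < c) (hu0' : 0 < u) (hu1 : u ≤ 1)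
    (hq0 : 0 ≤ q) (hq1 : q ≤ 1)
    (hqR : 1 - u ≤ (1+u)*q) (hqW : 0 ≤ 2*u^2 + 2*u*q + (1+u^2)*(q-1))
    (hch : h^2/4 ≤ c) (hmax : 2*(u*c) ≤ max 2 h) :
    (1 - q) * (1 + h + c) ≤ 2 + h := by
  have hu0 : 0 ≤ u := hu0'.le
  have hS0 : (0:ℝ) ≤ 1 - q := by linarith
  rcases le_total h 2 with hh2 | hh2
  · have huc : u * c ≤ 1 := by rw [max_eq_left hh2] at hmax; linarith
    have hmul : u * ((1 - q) * (1 + h + c)) ≤ u * (2 + h) := by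
      nlinarith [mul_nonneg (mul_nonneg hu0 hh.le) hq0,
        mul_nonneg hS0 (show (0:ℝ) ≤ 1 - u*c by linarith), hqR]
    exact le_of_mul_le_mul_left hmul hu0'
  · have huc : u * c ≤ h/2 := by rw [max_eq_right hh2] at hmax; linarith
    have huh : u * h ≤ 2 := by
      nlinarith [mul_le_mul_of_nonneg_left hch hu0]
    rcases le_total ((1-q)/2) (u*q) with hK | hK
    · have hmul : u * ((1 - q) * (1 + h + c)) ≤ u * (2 + h) := by
        nlinarith [mul_nonneg hh.le (show (0:ℝ) ≤ u*q - (1-q)/2 by linarith),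
          mul_nonneg hu0 (show (0:ℝ) ≤ 1 + q by linarith),
          mul_nonneg hS0 (show (0:ℝ) ≤ h/2 - u*c by linarith)]
      exact le_of_mul_le_mul_left hmul hu0'
    · have hmul : u * (u * ((1 - q) * (1 + h + c))) ≤ u * (u * (2 + h)) := by
        nlinarith [mul_nonneg (show (0:ℝ) ≤ 2 - u*h by linarith)
            (show (0:ℝ) ≤ (1-q)/2 - u*q by linarith),
          mul_nonneg (mul_nonneg hu0 hS0) (show (0:ℝ) ≤ h/2 - u*c by linarith),
          hqW]
      exact le_of_mul_le_mul_left (le_of_mul_le_mul_left hmul hu0') hu0'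

set_option maxHeartbeats 1000000 in
/-- Stability of the ETD-RK1 time discretization of the upwind finite-difference
scheme for the dimensionless advection–diffusion equation under the time-step
constraint `τ ≤ max {2, h}`: for all `η ∈ (0,1]`, the squared growth-factor modulus
`Q_u(τ,h,η) = (exp(−4τη/h²) + (h/2)(exp(−4τη/h²) − 1))²
  + (h²(1−η)/(4η))(exp(−4τη/h²) − 1)²` is at most 1. -/
theorem etdrk1_upwind_stability
    (τ h η : ℝ) (hh : 0 < h) (hτ0 : 0 < τ) (hτ : τ ≤ max 2 h)
    (hη0 : 0 < η) (hη1 : η ≤ 1) :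
    (Real.exp (-4 * τ * η / h ^ 2) +
        (h / 2) * (Real.exp (-4 * τ * η / h ^ 2) - 1)) ^ 2 +
      (h ^ 2 * (1 - η) / (4 * η)) * (Real.exp (-4 * τ * η / h ^ 2) - 1) ^ 2 ≤ 1 := by
  have h2 : (0:ℝ) < h^2 := by positivity
  obtain ⟨c, hc⟩ : ∃ c : ℝ, c = h^2/(4*η) := ⟨_, rfl⟩
  have hc0 : 0 < c := by rw [hc]; positivity
  obtain ⟨u, hu⟩ : ∃ u : ℝ, u = 2*τ*η/h^2 := ⟨_, rfl⟩
  have hu0' : 0 < u := by rw [hu]; positivity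
  have huc2 : 2*(u*c) = τ := by rw [hu, hc]; field_simp; ring
  have hxe : -4 * τ * η / h ^ 2 = -u + -u := by rw [hu]; ring
  rw [hxe, Real.exp_add]
  obtain ⟨E, hE⟩ : ∃ E : ℝ, E = Real.exp (-u) := ⟨_, rfl⟩
  rw [← hE]
  have hE0 : 0 < E := by rw [hE]; exact Real.exp_pos _
  have hE1 : E < 1 := by
    rw [hE, ← Real.exp_zero]
    exact Real.exp_lt_exp.mpr (by linarith)
  have hmax : 2*(u*c) ≤ max 2 h := by rw [huc2]; exact hτ
  -- key inequality
  have key : (1 - E*E) * (1 + h + c) ≤ 2 + h := by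
    by_cases hc1 : c ≤ 1
    · nlinarith [mul_pos (mul_pos hE0 hE0) (show (0:ℝ) < 1 + h + c by linarith),
        mul_pos hE0 hE0]
    · push_neg at hc1
      have hch : h^2/4 ≤ c := by
        rw [hc]
        apply div_le_div_of_nonneg_left (le_of_lt h2) (by positivity) (by linarith)
      have hu1 : u ≤ 1 := by
        rcases le_total h 2 with hh2 | hh2
        · have hτ2 : τ ≤ 2 := by rw [max_eq_left hh2] at hτ; exact hτ
          nlinarith
        · have hτh : τ ≤ h := by rw [max_eq_right hh2] at hτ; exact hτ
          nlinarith [mul_le_mul_of_nonneg_left hch hu0'.le]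
      have hu0 : 0 ≤ u := hu0'.le
      obtain ⟨q, hq0, hq1, hqE, hqR, hqW⟩ :
          ∃ q : ℝ, 0 ≤ q ∧ q ≤ 1 ∧ q ≤ E*E ∧ 1 - u ≤ (1+u)*q ∧
            0 ≤ 2*u^2 + 2*u*q + (1+u^2)*(q-1) := by
        refine ⟨(1 - u + u^2/2 - u^3/6 - 5*u^4/96)^2, sq_nonneg _, ?_, ?_,
          helperR hu0 hu1, helperW hu0 hu1⟩
        · have hB0 := Qnonneg hu0 hu1
          have hB1 : 1 - u + u^2/2 - u^3/6 - 5*u^4/96 ≤ 1 := by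
            nlinarith [mul_nonneg hu0 hu0, mul_nonneg (mul_nonneg hu0 hu0) hu0,
              mul_nonneg (mul_nonneg (mul_nonneg hu0 hu0) hu0) hu0]
          nlinarith [mul_nonneg hB0 (show (0:ℝ) ≤ 1 + (1 - u + u^2/2 - u^3/6 - 5*u^4/96) by linarith)]
        · have hQ := expQ hu0 hu1
          have hB0 := Qnonneg hu0 hu1
          rw [hE]
          nlinarith [Real.exp_pos (-u)]
      have key2 := keyaux h c u q hh hc1 hu0' hu1 hq0 hq1 hqR hqW hch hmax
      nlinarith [mul_le_mul_of_nonneg_right (show 1 - E*E ≤ 1 - q by linarith)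
        (show (0:ℝ) ≤ 1 + h + c by linarith)]
  -- conclude from key
  have hb : h ^ 2 * (1 - η) / (4 * η) = c - h^2/4 := by
    rw [hc]; field_simp
  rw [hb]
  have hs0 : 0 ≤ 1 - E*E := by nlinarith
  nlinarith [mul_le_mul_of_nonneg_left key hs0]
end

section
/- For every τ with 0 < τ ≤ 2 and every x > 0, one has τ·(e^{−x} − 1)² < x. Equivalently, for 0 < τ ≤ 2, h > 0, and η ∈ (0,1], the quantity Q₂(τ,h,η) := (h²/(4η))·(exp(−4τη/h²) − 1)² satisfies Q₂(τ,h,η) < 1. -/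
/-- `tanh y < y` for `y > 0`, in the form `sinh y < y * cosh y`. -/
lemma sinh_lt_mul_cosh (y : ℝ) (hy : 0 < y) : Real.sinh y < y * Real.cosh y := by
  have hmono : StrictMonoOn (fun z : ℝ => z * Real.cosh z - Real.sinh z) (Set.Ici 0) := by
    apply strictMonoOn_of_deriv_pos (convex_Ici 0)
    · exact ((continuous_id.mul Real.continuous_cosh).sub Real.continuous_sinh).continuousOn
    · intro z hz
      rw [interior_Ici] at hz
      have hd : HasDerivAt (fun z : ℝ => z * Real.cosh z - Real.sinh z) (z * Real.sinh z) z := by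
        have h1 : HasDerivAt (fun z : ℝ => z * Real.cosh z)
            (1 * Real.cosh z + z * Real.sinh z) z :=
          (hasDerivAt_id z).mul (Real.hasDerivAt_cosh z)
        have := h1.sub (Real.hasDerivAt_sinh z)
        exact this.congr_deriv (by ring)
      rw [hd.deriv]
      exact mul_pos hz (Real.sinh_pos_iff.mpr hz)
  have := hmono (Set.self_mem_Ici) (Set.mem_Ici.mpr hy.le) hy
  simpa using this

/-- Key elementary inequality: `2(e^{-x}-1)^2 < x` for all `x > 0`. -/
lemma two_mul_sq_exp_neg_sub_one_lt (x : ℝ) (hx : 0 < x) :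
    2 * (Real.exp (-x) - 1) ^ 2 < x := by
  have ht0 : 0 < Real.exp (-x) := Real.exp_pos _
  have ht1 : Real.exp (-x) < 1 := Real.exp_lt_one_iff.mpr (by linarith)
  -- from tanh(x/2) < x/2 : 1 - e^{-x} < (x/2)(1 + e^{-x})
  have hsc := sinh_lt_mul_cosh (x / 2) (by linarith)
  rw [Real.sinh_eq, Real.cosh_eq] at hsc
  have hb : 0 < Real.exp (-(x / 2)) := Real.exp_pos _
  have hab : Real.exp (x / 2) * Real.exp (-(x / 2)) = 1 := by
    rw [← Real.exp_add]; norm_num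
  have hbb : Real.exp (-(x / 2)) * Real.exp (-(x / 2)) = Real.exp (-x) := by
    rw [← Real.exp_add]; ring_nf
  have hkey : 1 - Real.exp (-x) < x / 2 * (1 + Real.exp (-x)) := by
    have h2 := mul_lt_mul_of_pos_right hsc hb
    nlinarith [h2, hab, hbb]
  nlinarith [hkey, ht0, ht1, sq_nonneg (Real.exp (-x))]

/-- For `0 < τ ≤ 2` one has `τ·(e^{−x} − 1)² < x` for all `x > 0`; equivalently,
the auxiliary quantity `Q₂(τ,h,η) = (h²/(4η))·(exp(−4τη/h²) − 1)²` from the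
stability analysis of the upwind ETD-RK1 scheme satisfies `Q₂(τ,h,η) < 1`
for all `h > 0` and `η ∈ (0,1]`. -/
theorem etdrk1_upwind_Q2_lt_one
    (τ : ℝ) (hτ0 : 0 < τ) (hτ2 : τ ≤ 2) :
    (∀ x : ℝ, 0 < x → τ * (Real.exp (-x) - 1) ^ 2 < x) ∧
      (∀ h η : ℝ, 0 < h → 0 < η → η ≤ 1 →
        (h ^ 2 / (4 * η)) * (Real.exp (-4 * τ * η / h ^ 2) - 1) ^ 2 < 1) := by
  have key : ∀ x : ℝ, 0 < x → τ * (Real.exp (-x) - 1) ^ 2 < x := by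
    intro x hx
    have h2 := two_mul_sq_exp_neg_sub_one_lt x hx
    nlinarith [sq_nonneg (Real.exp (-x) - 1)]
  refine ⟨key, fun h η hh hη hη1 => ?_⟩
  have hx : 0 < 4 * τ * η / h ^ 2 := by positivity
  have harg : -4 * τ * η / h ^ 2 = -(4 * τ * η / h ^ 2) := by ring
  have hk := key _ hx
  rw [harg]
  have hs : (Real.exp (-(4 * τ * η / h ^ 2)) - 1) ^ 2 < 4 * η / h ^ 2 := by
    rw [lt_div_iff₀ (by positivity)]
    have hmul : τ * (Real.exp (-(4 * τ * η / h ^ 2)) - 1) ^ 2 * h ^ 2 < 4 * τ * η := by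
      calc τ * (Real.exp (-(4 * τ * η / h ^ 2)) - 1) ^ 2 * h ^ 2
          < (4 * τ * η / h ^ 2) * h ^ 2 := by
            exact mul_lt_mul_of_pos_right hk (by positivity)
        _ = 4 * τ * η := by field_simp
    nlinarith
  rw [div_mul_eq_mul_div, div_lt_one (by positivity)]
  have := (lt_div_iff₀ (by positivity : (0:ℝ) < h ^ 2)).mp hs
  nlinarith
end

section
/- For every τ with 0 < τ ≤ 2, every h > 0, and every η ∈ (0,1], one has Q_u(τ,h,η) ≤ 1, where Q_u(τ,h,η) = (exp(−4τη/h²) + (h/2)·(exp(−4τη/h²) − 1))² + (h²(1−η)/(4η))·(exp(−4τη/h²) − 1)². -/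
lemma etdrk1_aux_key (x : ℝ) (hx : 0 ≤ x) :
    0 ≤ x - 2 + (x + 2) * Real.exp (-x) := by
  have hmono : MonotoneOn (fun t : ℝ => t - 2 + (t + 2) * Real.exp (-t)) (Set.Ici 0) := by
    have hderiv : ∀ y ∈ interior (Set.Ici (0:ℝ)),
        HasDerivAt (fun t : ℝ => t - 2 + (t + 2) * Real.exp (-t))
          (1 - (y + 1) * Real.exp (-y)) y := by
      intro y _
      have h1 : HasDerivAt (fun t : ℝ => Real.exp (-t)) (-Real.exp (-y)) y := by
        simpa [Function.comp_def] using (Real.hasDerivAt_exp (-y)).comp y ((hasDerivAt_id y).neg)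
      have h2 : HasDerivAt (fun t : ℝ => (t + 2) * Real.exp (-t))
          (1 * Real.exp (-y) + (y + 2) * (-Real.exp (-y))) y :=
        ((hasDerivAt_id y).add_const 2).mul h1
      have h3 : HasDerivAt (fun t : ℝ => t - 2) (1:ℝ) y :=
        (hasDerivAt_id y).sub_const 2
      have : HasDerivAt (fun t : ℝ => t - 2 + (t + 2) * Real.exp (-t))
          (1 + (1 * Real.exp (-y) + (y + 2) * (-Real.exp (-y)))) y := h3.add h2
      convert this using 1
      ring
    apply monotoneOn_of_deriv_nonneg (convex_Ici 0)
    · apply Continuous.continuousOn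
      continuity
    · intro y hy
      exact (hderiv y hy).differentiableAt.differentiableWithinAt
    · intro y hy
      rw [(hderiv y hy).deriv]
      have h4 : (y + 1) * Real.exp (-y) ≤ 1 := by
        have := Real.add_one_le_exp y
        have hexp : 0 < Real.exp (-y) := Real.exp_pos _
        calc (y + 1) * Real.exp (-y) ≤ Real.exp y * Real.exp (-y) :=
              mul_le_mul_of_nonneg_right this hexp.le
          _ = 1 := by rw [← Real.exp_add]; simp
      linarith
  have h0 : (fun t : ℝ => t - 2 + (t + 2) * Real.exp (-t)) 0 = 0 := by simp
  have := hmono (Set.self_mem_Ici) (Set.mem_Ici.2 hx) hx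
  simpa [h0] using this

/-- First half of the stability proof for the upwind ETD-RK1 scheme: for
`0 < τ ≤ 2`, `h > 0`, and `η ∈ (0,1]`, the squared growth-factor modulus
`Q_u(τ,h,η) = (exp(−4τη/h²) + (h/2)(exp(−4τη/h²) − 1))²
  + (h²(1−η)/(4η))(exp(−4τη/h²) − 1)²` is at most 1. -/
theorem etdrk1_upwind_stability_tau_le_two
    (τ h η : ℝ) (hτ0 : 0 < τ) (hτ2 : τ ≤ 2) (hh : 0 < h)
    (hη0 : 0 < η) (hη1 : η ≤ 1) :
    (Real.exp (-4 * τ * η / h ^ 2) +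
        (h / 2) * (Real.exp (-4 * τ * η / h ^ 2) - 1)) ^ 2 +
      (h ^ 2 * (1 - η) / (4 * η)) * (Real.exp (-4 * τ * η / h ^ 2) - 1) ^ 2 ≤ 1 := by
  set x : ℝ := 4 * τ * η / h ^ 2 with hxdef
  have hh2 : (0:ℝ) < h ^ 2 := by positivity
  have hx0 : 0 < x := by positivity
  set E : ℝ := Real.exp (-4 * τ * η / h ^ 2) with hEdef
  have hEx : E = Real.exp (-x) := by rw [hEdef, hxdef]; ring_nf
  have hE0 : 0 < E := Real.exp_pos _
  have hE1 : E ≤ 1 := by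
    rw [hEx]
    exact Real.exp_le_one_iff.2 (by linarith)
  have hkey : 0 ≤ x - 2 + (x + 2) * E := by
    rw [hEx]; exact etdrk1_aux_key x hx0.le
  -- multiply by h^2 : 0 ≤ 4τη - 2h² + (4τη + 2h²) E
  have hkey2 : 0 ≤ 4 * τ * η - 2 * h ^ 2 + (4 * τ * η + 2 * h ^ 2) * E := by
    have := mul_nonneg hkey hh2.le
    have hxh : x * h ^ 2 = 4 * τ * η := by
      rw [hxdef]; field_simp
    nlinarith [this]
  -- hence h²(1-E) ≤ 2τη(1+E) ≤ 4η(1+E)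
  have hkey3 : h ^ 2 * (1 - E) ≤ 4 * η * (1 + E) := by
    nlinarith [mul_nonneg (mul_nonneg (by linarith : (0:ℝ) ≤ 2 - τ) hη0.le)
      (by linarith : (0:ℝ) ≤ 1 + E)]
  have h4η : (0:ℝ) < 4 * η := by linarith
  have main : (E + (h / 2) * (E - 1)) ^ 2 * (4 * η) + h ^ 2 * (1 - η) * (E - 1) ^ 2
      ≤ 4 * η := by
    nlinarith [mul_le_mul_of_nonneg_right hkey3 (by linarith : (0:ℝ) ≤ 1 - E),
      mul_nonneg (mul_nonneg (mul_nonneg hη0.le hh.le) hE0.le)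
        (by linarith : (0:ℝ) ≤ 1 - E)]
  have : (E + (h / 2) * (E - 1)) ^ 2 + (h ^ 2 * (1 - η) / (4 * η)) * (E - 1) ^ 2
      = ((E + (h / 2) * (E - 1)) ^ 2 * (4 * η) + h ^ 2 * (1 - η) * (E - 1) ^ 2) / (4 * η) := by
    field_simp
  rw [this]
  rw [div_le_one h4η]
  exact main
end

section
/- For every h > 0 and η ∈ (0,1], the function θ ↦ Q̄(h,η,θ) := (exp(−4θη/h) + (h/(2θ))·(exp(−4θη/h) − 1))² + (h²(1−η)/(4θ²η))·(exp(−4θη/h) − 1)² is nonincreasing on (0,∞), and since Q̄(h,η,θ) → 1 as θ → 0⁺, it satisfies Q̄(h,η,θ) ≤ 1 for all θ > 0. -/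
open Real Filter Set Topology

noncomputable def psiQ (s : ℝ) : ℝ := 2 * (1 - Real.exp (-s)) / s - Real.exp (-s)

lemma expneg_hasDeriv (s : ℝ) : HasDerivAt (fun x : ℝ => Real.exp (-x)) (-Real.exp (-s)) s := by
  simpa [Function.comp_def] using (Real.hasDerivAt_exp (-s)).comp s (hasDerivAt_neg s)

lemma psiQ_hasDeriv {s : ℝ} (hs : 0 < s) :
    HasDerivAt psiQ ((Real.exp (-s) * (s ^ 2 + 2 * s + 2) - 2) / s ^ 2) s := by
  have h1 : HasDerivAt (fun x : ℝ => 2 * (1 - Real.exp (-x))) (2 * Real.exp (-s)) s := by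
    simpa using ((hasDerivAt_const s (1:ℝ)).sub (expneg_hasDeriv s)).const_mul 2
  have h2 : HasDerivAt (fun x : ℝ => 2 * (1 - Real.exp (-x)) / x)
      ((2 * Real.exp (-s) * s - 2 * (1 - Real.exp (-s)) * 1) / s ^ 2) s :=
    h1.div (hasDerivAt_id s) hs.ne'
  have h3 := h2.sub (expneg_hasDeriv s)
  refine h3.congr_deriv ?_
  field_simp [hs.ne']
  ring

lemma psiQ_anti : AntitoneOn psiQ (Set.Ioi (0:ℝ)) := by
  have hint : interior (Set.Ioi (0:ℝ)) = Set.Ioi 0 := interior_Ioi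
  apply antitoneOn_of_deriv_nonpos (convex_Ioi 0)
  · intro x hx
    exact (psiQ_hasDeriv hx).continuousAt.continuousWithinAt
  · rw [hint]
    intro x hx
    exact (psiQ_hasDeriv hx).differentiableAt.differentiableWithinAt
  · rw [hint]
    intro x hx
    rw [(psiQ_hasDeriv hx).deriv]
    apply div_nonpos_of_nonpos_of_nonneg _ (sq_nonneg x)
    have hq := Real.quadratic_le_exp_of_nonneg hx.le
    have h1 : Real.exp x * Real.exp (-x) = 1 := by rw [← Real.exp_add]; simp
    nlinarith [Real.exp_pos (-x), Real.exp_pos x]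

lemma psiQ_nonneg {s : ℝ} (hs : 0 < s) : 0 ≤ psiQ s := by
  have hE : Real.exp (-s) * (1 + s) ≤ 1 := by
    have h1 : Real.exp s * Real.exp (-s) = 1 := by rw [← Real.exp_add]; simp
    nlinarith [Real.add_one_le_exp s, Real.exp_pos (-s)]
  have : psiQ s = (2 * (1 - Real.exp (-s)) - s * Real.exp (-s)) / s := by
    unfold psiQ; field_simp
  rw [this]
  apply div_nonneg _ hs.le
  nlinarith [Real.exp_pos (-s), hE, hs]

lemma Qident (h η θ : ℝ) (hh : 0 < h) (hη0 : 0 < η) (hθ : 0 < θ) :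
    (Real.exp (-4 * θ * η / h) + (h / (2 * θ)) * (Real.exp (-4 * θ * η / h) - 1)) ^ 2 +
        (h ^ 2 * (1 - η) / (4 * θ ^ 2 * η)) * (Real.exp (-4 * θ * η / h) - 1) ^ 2
      = (1 - η) * Real.exp (-4 * θ * η / h) ^ 2 + η * (psiQ (4 * θ * η / h)) ^ 2 := by
  have hneg : -(4 * θ * η / h) = -4 * θ * η / h := by ring
  unfold psiQ
  rw [hneg]
  set E := Real.exp (-4 * θ * η / h) with hE
  have h1 : h ≠ 0 := hh.ne'
  have h2 : θ ≠ 0 := hθ.ne'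
  have h3 : η ≠ 0 := hη0.ne'
  field_simp
  ring

lemma slope_exp : Tendsto (fun x : ℝ => (Real.exp x - 1) / x) (𝓝[≠] (0:ℝ)) (𝓝 1) := by
  have := hasDerivAt_iff_tendsto_slope.mp (Real.hasDerivAt_exp 0)
  simp only [slope_fun_def_field, Real.exp_zero, sub_zero] at this
  simpa using this

/-- For `h > 0` and `η ∈ (0,1]`, the auxiliary function
`Q̄(h,η,θ) = (exp(−4θη/h) + (h/(2θ))(exp(−4θη/h) − 1))²
  + (h²(1−η)/(4θ²η))(exp(−4θη/h) − 1)²`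
is nonincreasing in `θ` on `(0,∞)`, tends to `1` as `θ → 0⁺`, and hence is
bounded above by `1` for all `θ > 0`. -/
theorem etdrk1_upwind_Qbar_antitone_and_le_one
    (h η : ℝ) (hh : 0 < h) (hη0 : 0 < η) (hη1 : η ≤ 1) :
    (∀ θ₁ θ₂ : ℝ, 0 < θ₁ → θ₁ ≤ θ₂ →
      (Real.exp (-4 * θ₂ * η / h) + (h / (2 * θ₂)) * (Real.exp (-4 * θ₂ * η / h) - 1)) ^ 2 +
          (h ^ 2 * (1 - η) / (4 * θ₂ ^ 2 * η)) * (Real.exp (-4 * θ₂ * η / h) - 1) ^ 2 ≤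
        (Real.exp (-4 * θ₁ * η / h) + (h / (2 * θ₁)) * (Real.exp (-4 * θ₁ * η / h) - 1)) ^ 2 +
          (h ^ 2 * (1 - η) / (4 * θ₁ ^ 2 * η)) * (Real.exp (-4 * θ₁ * η / h) - 1) ^ 2) ∧
    Filter.Tendsto
      (fun θ : ℝ =>
        (Real.exp (-4 * θ * η / h) + (h / (2 * θ)) * (Real.exp (-4 * θ * η / h) - 1)) ^ 2 +
          (h ^ 2 * (1 - η) / (4 * θ ^ 2 * η)) * (Real.exp (-4 * θ * η / h) - 1) ^ 2)
      (nhdsWithin 0 (Set.Ioi 0)) (nhds 1) ∧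
    (∀ θ : ℝ, 0 < θ →
      (Real.exp (-4 * θ * η / h) + (h / (2 * θ)) * (Real.exp (-4 * θ * η / h) - 1)) ^ 2 +
        (h ^ 2 * (1 - η) / (4 * θ ^ 2 * η)) * (Real.exp (-4 * θ * η / h) - 1) ^ 2 ≤ 1) := by
  have key : ∀ θ : ℝ, 0 < θ →
      (Real.exp (-4 * θ * η / h) + (h / (2 * θ)) * (Real.exp (-4 * θ * η / h) - 1)) ^ 2 +
          (h ^ 2 * (1 - η) / (4 * θ ^ 2 * η)) * (Real.exp (-4 * θ * η / h) - 1) ^ 2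
        = (1 - η) * Real.exp (-4 * θ * η / h) ^ 2 + η * (psiQ (4 * θ * η / h)) ^ 2 :=
    fun θ hθ => Qident h η θ hh hη0 hθ
  have mono : ∀ θ₁ θ₂ : ℝ, 0 < θ₁ → θ₁ ≤ θ₂ →
      (Real.exp (-4 * θ₂ * η / h) + (h / (2 * θ₂)) * (Real.exp (-4 * θ₂ * η / h) - 1)) ^ 2 +
          (h ^ 2 * (1 - η) / (4 * θ₂ ^ 2 * η)) * (Real.exp (-4 * θ₂ * η / h) - 1) ^ 2 ≤
        (Real.exp (-4 * θ₁ * η / h) + (h / (2 * θ₁)) * (Real.exp (-4 * θ₁ * η / h) - 1)) ^ 2 +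
          (h ^ 2 * (1 - η) / (4 * θ₁ ^ 2 * η)) * (Real.exp (-4 * θ₁ * η / h) - 1) ^ 2 := by
    intro θ₁ θ₂ h1 h12
    have h2 : 0 < θ₂ := h1.trans_le h12
    rw [key θ₁ h1, key θ₂ h2]
    have hs1 : 0 < 4 * θ₁ * η / h := by positivity
    have hs2 : 0 < 4 * θ₂ * η / h := by positivity
    have hs12 : 4 * θ₁ * η / h ≤ 4 * θ₂ * η / h := by gcongr
    have hψ : psiQ (4 * θ₂ * η / h) ≤ psiQ (4 * θ₁ * η / h) := psiQ_anti hs1 hs2 hs12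
    have hψ0 : 0 ≤ psiQ (4 * θ₂ * η / h) := psiQ_nonneg hs2
    have hEle : Real.exp (-4 * θ₂ * η / h) ≤ Real.exp (-4 * θ₁ * η / h) := by
      apply Real.exp_le_exp.mpr
      have : -4 * θ₂ * η / h = -(4 * θ₂ * η / h) := by ring
      rw [this, show -4 * θ₁ * η / h = -(4 * θ₁ * η / h) by ring]
      exact neg_le_neg hs12
    have hE2 : Real.exp (-4 * θ₂ * η / h) ^ 2 ≤ Real.exp (-4 * θ₁ * η / h) ^ 2 :=
      pow_le_pow_left₀ (Real.exp_pos _).le hEle 2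
    have hψ2 : psiQ (4 * θ₂ * η / h) ^ 2 ≤ psiQ (4 * θ₁ * η / h) ^ 2 :=
      pow_le_pow_left₀ hψ0 hψ 2
    have h1η : (0:ℝ) ≤ 1 - η := by linarith
    exact add_le_add (mul_le_mul_of_nonneg_left hE2 h1η)
      (mul_le_mul_of_nonneg_left hψ2 hη0.le)
  have hEexp : Tendsto (fun θ : ℝ => Real.exp (-4 * θ * η / h)) (𝓝[>] (0:ℝ)) (𝓝 1) := by
    apply tendsto_nhdsWithin_of_tendsto_nhds
    have hc : Continuous fun θ : ℝ => Real.exp (-4 * θ * η / h) := by continuity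
    have h0 := hc.tendsto 0
    norm_num at h0
    exact h0.congr fun θ => by congr 1; ring
  have hmap : Tendsto (fun θ : ℝ => -(4 * θ * η / h)) (𝓝[>] (0:ℝ)) (𝓝[≠] (0:ℝ)) := by
    apply tendsto_nhdsWithin_of_tendsto_nhds_of_eventually_within
    · have hc : Continuous fun θ : ℝ => -(4 * θ * η / h) := by continuity
      have h0 := hc.tendsto 0
      norm_num at h0
      exact (h0.congr fun θ => by ring).mono_left nhdsWithin_le_nhds
    · filter_upwards [self_mem_nhdsWithin] with θ hθ
      have : 0 < 4 * θ * η / h := by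
        have : (0:ℝ) < θ := hθ
        positivity
      simp only [Set.mem_compl_iff, Set.mem_singleton_iff]
      exact neg_ne_zero.mpr this.ne'
  have hg : Tendsto (fun θ : ℝ => (1 - Real.exp (-(4 * θ * η / h))) / (4 * θ * η / h))
      (𝓝[>] (0:ℝ)) (𝓝 1) := by
    have := slope_exp.comp hmap
    apply this.congr
    intro θ
    simp only [Function.comp]
    rw [show Real.exp (-(4 * θ * η / h)) - 1 = -(1 - Real.exp (-(4 * θ * η / h))) by ring,
      neg_div_neg_eq]
  have hψt : Tendsto (fun θ : ℝ => psiQ (4 * θ * η / h)) (𝓝[>] (0:ℝ)) (𝓝 1) := by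
    have hE' : Tendsto (fun θ : ℝ => Real.exp (-(4 * θ * η / h))) (𝓝[>] (0:ℝ)) (𝓝 1) := by
      apply hEexp.congr
      intro θ; congr 1; ring
    have := ((hg.const_mul 2).sub hE')
    norm_num at this
    apply this.congr
    intro θ
    unfold psiQ
    ring
  have hQt : Tendsto
      (fun θ : ℝ => (1 - η) * Real.exp (-4 * θ * η / h) ^ 2 + η * (psiQ (4 * θ * η / h)) ^ 2)
      (𝓝[>] (0:ℝ)) (𝓝 1) := by
    have := (((hEexp.pow 2).const_mul (1 - η)).add ((hψt.pow 2).const_mul η))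
    norm_num at this
    convert this using 2
    ring
  have tend : Filter.Tendsto
      (fun θ : ℝ =>
        (Real.exp (-4 * θ * η / h) + (h / (2 * θ)) * (Real.exp (-4 * θ * η / h) - 1)) ^ 2 +
          (h ^ 2 * (1 - η) / (4 * θ ^ 2 * η)) * (Real.exp (-4 * θ * η / h) - 1) ^ 2)
      (𝓝[>] (0:ℝ)) (𝓝 1) := by
    apply hQt.congr'
    filter_upwards [self_mem_nhdsWithin] with θ hθ
    exact (key θ hθ).symm
  refine ⟨mono, tend, ?_⟩
  intro θ hθ
  apply ge_of_tendsto tend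
  filter_upwards [Ioo_mem_nhdsGT_of_mem ⟨le_refl (0:ℝ), hθ⟩] with θ' hθ'
  exact mono θ' θ hθ'.1 hθ'.2.le
end

section
/- For every h > 0 and every η ∈ (0,1], one has Q_u(h,h,η) ≤ 1; that is, (exp(−4η/h) + (h/2)·(exp(−4η/h) − 1))² + (h²(1−η)/(4η))·(exp(−4η/h) − 1)² ≤ 1. (This is the stability of the upwind ETD-RK1 scheme when the time step equals the mesh size, τ = h.) -/
lemma etdrk1_key_exp (x : ℝ) (hx : 0 ≤ x) : 2 - x ≤ (2 + x) * Real.exp (-x) := by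
  have hd : ∀ y : ℝ, HasDerivAt (fun t : ℝ => t - 2 + (2 + t) * Real.exp (-t))
      (1 - (1 + y) * Real.exp (-y)) y := by
    intro y
    have h1 : HasDerivAt (fun t : ℝ => Real.exp (-t)) (-Real.exp (-y)) y := by
      simpa [Function.comp_def] using (Real.hasDerivAt_exp (-y)).comp y ((hasDerivAt_id y).neg)
    have h2 : HasDerivAt (fun t : ℝ => (2 + t) * Real.exp (-t))
        (1 * Real.exp (-y) + (2 + y) * (-Real.exp (-y))) y :=
      (((hasDerivAt_id y).const_add 2)).mul h1
    have h3 := (((hasDerivAt_id y).sub_const 2)).add h2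
    refine h3.congr_deriv ?_
    ring
  have mono : Monotone (fun t : ℝ => t - 2 + (2 + t) * Real.exp (-t)) := by
    apply monotone_of_deriv_nonneg
    · exact fun y => (hd y).differentiableAt
    · intro y
      rw [(hd y).deriv]
      have h1 := Real.add_one_le_exp y
      have h2 : Real.exp y * Real.exp (-y) = 1 := by
        rw [← Real.exp_add]; simp
      have h3 := Real.exp_pos (-y)
      nlinarith
  have := mono hx
  norm_num at this
  linarith [this]

/-- Stability of the upwind ETD-RK1 scheme when the time step equals the mesh
size (`τ = h`): for every `h > 0` and `η ∈ (0,1]`,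
`Q_u(h,h,η) = (exp(−4η/h) + (h/2)(exp(−4η/h) − 1))²
  + (h²(1−η)/(4η))(exp(−4η/h) − 1)² ≤ 1`. -/
theorem etdrk1_upwind_stability_tau_eq_h
    (h η : ℝ) (hh : 0 < h) (hη0 : 0 < η) (hη1 : η ≤ 1) :
    (Real.exp (-4 * η / h) + (h / 2) * (Real.exp (-4 * η / h) - 1)) ^ 2 +
      (h ^ 2 * (1 - η) / (4 * η)) * (Real.exp (-4 * η / h) - 1) ^ 2 ≤ 1 := by
  set E := Real.exp (-4 * η / h) with hEdef
  have hE0 : 0 < E := Real.exp_pos _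
  have hE1 : E ≤ 1 := by
    apply Real.exp_le_one_iff.mpr
    have h1 : -4 * η / h = -(4 * η / h) := by ring
    have h2 : 0 ≤ 4 * η / h := by positivity
    linarith
  have hx : 0 ≤ 4 * η / h := by positivity
  have hkey0 := etdrk1_key_exp (4 * η / h) hx
  have hEeq : Real.exp (-(4 * η / h)) = E := by rw [hEdef]; ring_nf
  rw [hEeq] at hkey0
  -- multiply by h : (2h + 4η)(1 - E) ≤ 8η
  have hkey : (2 * h + 4 * η) * (1 - E) ≤ 8 * η := by
    have h1 : (2 - 4 * η / h) * h ≤ ((2 + 4 * η / h) * E) * h :=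
      mul_le_mul_of_nonneg_right hkey0 hh.le
    have h2 : (2 - 4 * η / h) * h = 2 * h - 4 * η := by field_simp
    have h3 : ((2 + 4 * η / h) * E) * h = (2 * h + 4 * η) * E := by field_simp
    nlinarith [h1, h2, h3]
  have h4η : 0 < 4 * η := by linarith
  have H : 4 * η * ((E + (h / 2) * (E - 1)) ^ 2) + (h ^ 2 * (1 - η)) * (E - 1) ^ 2
      ≤ 4 * η := by
    nlinarith [mul_nonneg (mul_nonneg (by linarith : (0:ℝ) ≤ 2 + h)
        (by linarith : (0:ℝ) ≤ 1 - E)) (by linarith : (0:ℝ) ≤ 8 * η - (2 * h + 4 * η) * (1 - E)),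
      mul_nonneg (mul_nonneg hh.le (by linarith : (0:ℝ) ≤ 1 - η)) (sq_nonneg (1 - E))]
  calc (E + (h / 2) * (E - 1)) ^ 2 + (h ^ 2 * (1 - η) / (4 * η)) * (E - 1) ^ 2
      = (4 * η * ((E + (h / 2) * (E - 1)) ^ 2) + (h ^ 2 * (1 - η)) * (E - 1) ^ 2) / (4 * η) := by
        field_simp
    _ ≤ (4 * η) / (4 * η) := by gcongr
    _ = 1 := div_self (ne_of_gt h4η)
end

section
/- For every h > 0, every τ with 0 < τ ≤ h, and every η ∈ (0,1], one has Q_u(τ,h,η) ≤ 1, where Q_u(τ,h,η) = (exp(−4τη/h²) + (h/2)·(exp(−4τη/h²) − 1))² + (h²(1−η)/(4η))·(exp(−4τη/h²) − 1)². (This is the second half of the stability proof for the upwind ETD-RK1 scheme, covering the CFL-type regime τ ≤ h; it follows from the case τ = h by observing that λ ↦ Q_u evaluated along a suitable parametrization is a concave-up quadratic in λ = τ/h bounded by 1 at λ = 0 and λ = 1.) -/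
private lemma lemA (t : ℝ) : (1 - t) * Real.exp t ≤ 1 := by
  have h := Real.add_one_le_exp (-t)
  have h2 := mul_le_mul_of_nonneg_right h (Real.exp_pos t).le
  have h3 : Real.exp (-t) * Real.exp t = 1 := by
    rw [← Real.exp_add]; simp
  nlinarith

private lemma lemB (t : ℝ) (ht : 0 ≤ t) : (2 - t) * Real.exp t ≤ 2 + t := by
  have hderiv : ∀ y : ℝ, HasDerivAt (fun y : ℝ => 2 + y - (2 - y) * Real.exp y)
      (1 - ((-1) * Real.exp y + (2 - y) * Real.exp y)) y := by
    intro y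
    have h1 : HasDerivAt (fun y : ℝ => 2 - y) (-1) y := by
      simpa using (hasDerivAt_id y).const_sub 2
    have h2 := h1.mul (Real.hasDerivAt_exp y)
    have h3 : HasDerivAt (fun y : ℝ => 2 + y) 1 y := by
      simpa using (hasDerivAt_id y).const_add 2
    exact h3.sub h2
  have key : MonotoneOn (fun y : ℝ => 2 + y - (2 - y) * Real.exp y) (Set.Ici 0) := by
    apply monotoneOn_of_deriv_nonneg (convex_Ici 0)
    · exact Continuous.continuousOn (by continuity)
    · intro y hy
      exact (hderiv y).differentiableAt.differentiableWithinAt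
    · intro y hy
      rw [(hderiv y).deriv]
      nlinarith [lemA y]
  have h0 := key Set.self_mem_Ici (Set.mem_Ici.2 ht) ht
  simp [Real.exp_zero] at h0
  linarith

private lemma lemC (x : ℝ) (hx : 0 ≤ x) : 4 * (Real.exp x - 1 - x) ≤ x ^ 2 * (Real.exp x + 1) := by
  rcases le_or_gt 2 x with h2 | h2
  · have h4 : (4 : ℝ) ≤ x ^ 2 := by nlinarith
    nlinarith [Real.exp_pos x, mul_le_mul_of_nonneg_right h4 (Real.exp_pos x).le]
  · have hB := lemB x hx
    have := mul_le_mul_of_nonneg_right hB (by linarith : (0:ℝ) ≤ 2 + x)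
    nlinarith [Real.exp_pos x]

/-- Second half of the stability proof for the upwind ETD-RK1 scheme, covering
the CFL-type regime `τ ≤ h`: for every `h > 0`, `0 < τ ≤ h`, and `η ∈ (0,1]`,
`Q_u(τ,h,η) = (exp(−4τη/h²) + (h/2)(exp(−4τη/h²) − 1))²
  + (h²(1−η)/(4η))(exp(−4τη/h²) − 1)² ≤ 1`. -/
theorem etdrk1_upwind_stability_tau_le_h
    (τ h η : ℝ) (hh : 0 < h) (hτ0 : 0 < τ) (hτ : τ ≤ h)
    (hη0 : 0 < η) (hη1 : η ≤ 1) :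
    (Real.exp (-4 * τ * η / h ^ 2) +
        (h / 2) * (Real.exp (-4 * τ * η / h ^ 2) - 1)) ^ 2 +
      (h ^ 2 * (1 - η) / (4 * η)) * (Real.exp (-4 * τ * η / h ^ 2) - 1) ^ 2 ≤ 1 := by
  set x : ℝ := 4 * τ * η / h ^ 2 with hxdef
  have hx0 : 0 < x := by positivity
  have hEeq : (-4 : ℝ) * τ * η / h ^ 2 = -x := by rw [hxdef]; ring
  rw [hEeq]
  set E : ℝ := Real.exp (-x) with hEdef
  have hEpos : 0 < E := Real.exp_pos _
  have hE1 : E < 1 := by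
    rw [hEdef]
    exact Real.exp_lt_one_iff.mpr (by linarith)
  have hs : 0 < 1 - E := by linarith
  -- exp x * E = 1
  have hmulE : Real.exp x * E = 1 := by
    rw [hEdef, ← Real.exp_add]; simp
  -- x * h ≤ 4
  have hxh : x * h ≤ 4 := by
    have h1 : x * h = 4 * τ * η / h := by
      rw [hxdef]; field_simp
    rw [h1]
    rw [div_le_iff₀ hh]
    nlinarith
  -- 4 τ η = x h²
  have hxτ : 4 * τ * η = x * h ^ 2 := by
    rw [hxdef]; field_simp
  -- Lemma C in E form: 4*(1 - E - x*E) ≤ x^2*(1 + E)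
  have hC := lemC x hx0.le
  have hC' : 4 * (1 - E - x * E) ≤ x ^ 2 * (1 + E) := by
    have := mul_le_mul_of_nonneg_right hC hEpos.le
    have hx2 : x ^ 2 * (Real.exp x + 1) * E = x ^ 2 * (Real.exp x * E) + x ^ 2 * E := by ring
    nlinarith [hmulE]
  -- (1+x) E ≤ 1
  have h1xE : 0 ≤ 1 - E - x * E := by
    have h1 := Real.add_one_le_exp x
    have := mul_le_mul_of_nonneg_right h1 hEpos.le
    nlinarith [hmulE]
  -- h * x * (1 - E - x*E) ≤ 4 * (1 - E - x*E) ≤ x^2 (1+E)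
  have step1 : h * x * (1 - E - x * E) ≤ x ^ 2 * (1 + E) := by
    have := mul_le_mul_of_nonneg_right hxh h1xE
    nlinarith
  -- h * (1 - E) ≤ x * (1 + E + h * E)  (divide step1 by x)
  have step2 : h * (1 - E) ≤ x * (1 + E + h * E) := by
    have hcancel : x * (h * (1 - E)) ≤ x * (x * (1 + E + h * E)) := by nlinarith
    exact le_of_mul_le_mul_left hcancel hx0
  -- τ * (1 - E) ≤ x * (1 + E + h * E)
  have step3 : τ * (1 - E) ≤ x * (1 + E + h * E) := by
    have : τ * (1 - E) ≤ h * (1 - E) := by nlinarith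
    linarith
  -- key : h^2 * (1 - E) ≤ 4 * η * (1 + E + h * E)
  have key : h ^ 2 * (1 - E) ≤ 4 * η * (1 + E + h * E) := by
    have hmul := mul_le_mul_of_nonneg_left step3 (by positivity : (0:ℝ) ≤ h ^ 2)
    -- h^2 * (x * (...)) = τ * (4 η * (...))
    have hrw : h ^ 2 * (x * (1 + E + h * E)) = τ * (4 * η * (1 + E + h * E)) := by
      linear_combination (-(1 + E + h * E)) * hxτ
    rw [hrw] at hmul
    have h2 : τ * (h ^ 2 * (1 - E)) ≤ τ * (4 * η * (1 + E + h * E)) := by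
      calc τ * (h ^ 2 * (1 - E)) = h ^ 2 * (τ * (1 - E)) := by ring
        _ ≤ τ * (4 * η * (1 + E + h * E)) := hmul
    exact le_of_mul_le_mul_left h2 hτ0
  -- final: rewrite goal over common denominator 4η
  have h4η : (0:ℝ) < 4 * η := by linarith
  have expand : (E + h / 2 * (E - 1)) ^ 2 + h ^ 2 * (1 - η) / (4 * η) * (E - 1) ^ 2
      = (4 * η * (E + h / 2 * (E - 1)) ^ 2 + h ^ 2 * (1 - η) * (E - 1) ^ 2) / (4 * η) := by
    field_simp
  rw [expand, div_le_one h4η]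
  nlinarith [mul_nonneg hs.le (sub_nonneg.2 key)]
end

section
/- Let a > 0 and d > 0. For every τ with 0 < τ ≤ max{2d/a², h/a}, every h > 0, and every η ∈ (0,1], one has (exp(−4dτη/h²) + (ah/(2d))·(exp(−4dτη/h²) − 1))² + (a²h²(1−η)/(4d²η))·(exp(−4dτη/h²) − 1)² ≤ 1. (This is the stability of the ETD-RK1 upwind finite-difference scheme for u_t + a u_x = d u_{xx} under the time-step constraint τ ≤ max{2d/a², h/a}.) -/
theorem key_exp (m : ℝ) (hm : 0 ≤ m) : 2 - m ≤ (2 + m) * Real.exp (-m) := by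
  have hderiv : ∀ y : ℝ, HasDerivAt (fun t : ℝ => (2 + t) * Real.exp (-t) + t)
      (1 - (1 + y) * Real.exp (-y)) y := by
    intro y
    have h1 : HasDerivAt (fun t : ℝ => Real.exp (-t)) (-Real.exp (-y)) y := by
      simpa [Function.comp_def] using (Real.hasDerivAt_exp (-y)).comp y (hasDerivAt_neg y)
    have h2 : HasDerivAt (fun t : ℝ => (2 + t) * Real.exp (-t))
        (1 * Real.exp (-y) + (2 + y) * -Real.exp (-y)) y :=
      ((hasDerivAt_id y).const_add 2).mul h1
    have h3 := h2.add (hasDerivAt_id y)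
    exact h3.congr_deriv (by ring)
  have hmono : MonotoneOn (fun t : ℝ => (2 + t) * Real.exp (-t) + t) (Set.Ici 0) := by
    apply monotoneOn_of_deriv_nonneg (convex_Ici 0)
    · exact Continuous.continuousOn (by continuity)
    · intro y hy
      exact (hderiv y).differentiableAt.differentiableWithinAt
    · intro y hy
      rw [(hderiv y).deriv]
      have h5 := Real.add_one_le_exp y
      have h4 : Real.exp y * Real.exp (-y) = 1 := by
        rw [← Real.exp_add]; simp
      nlinarith [Real.exp_pos (-y)]
  have h0 := hmono Set.self_mem_Ici (Set.mem_Ici.mpr hm) hm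
  simp only [Real.exp_zero] at h0
  norm_num at h0
  linarith

theorem pade (x m : ℝ) (hm : 0 ≤ m) (hx : x ≤ m) :
    (2 + m) * (1 - Real.exp (-x)) ≤ 2 * m := by
  have h1 := key_exp m hm
  have h2 : Real.exp (-m) ≤ Real.exp (-x) := Real.exp_le_exp.mpr (by linarith)
  nlinarith [mul_le_mul_of_nonneg_left h2 (by linarith : (0:ℝ) ≤ 2 + m)]

theorem pade2 (x B M : ℝ) (hB : 0 < B) (hM : 0 ≤ M) (hx : x * B ≤ M) :
    (2 * B + M) * (1 - Real.exp (-x)) ≤ 2 * M := by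
  have hx' : x ≤ M / B := (le_div_iff₀ hB).mpr hx
  have hp := pade x (M / B) (by positivity) hx'
  have h2 := mul_le_mul_of_nonneg_left hp hB.le
  have e1 : B * ((2 + M / B) * (1 - Real.exp (-x))) = (2 * B + M) * (1 - Real.exp (-x)) := by
    field_simp
  have e2 : B * (2 * (M / B)) = 2 * M := by field_simp
  rw [e1, e2] at h2
  exact h2

set_option maxHeartbeats 1000000 in
/-- Stability of the ETD-RK1 upwind finite-difference scheme for
`u_t + a u_x = d u_{xx}` (`a, d > 0`) under the time-step constraint
`τ ≤ max {2d/a², h/a}`: for all `h > 0` and `η ∈ (0,1]`,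
`(exp(−4dτη/h²) + (ah/(2d))(exp(−4dτη/h²) − 1))²
  + (a²h²(1−η)/(4d²η))(exp(−4dτη/h²) − 1)² ≤ 1`. -/
theorem etdrk1_upwind_stability_general
    (a d τ h η : ℝ) (ha : 0 < a) (hd : 0 < d) (hh : 0 < h)
    (hτ0 : 0 < τ) (hτ : τ ≤ max (2 * d / a ^ 2) (h / a))
    (hη0 : 0 < η) (hη1 : η ≤ 1) :
    (Real.exp (-4 * d * τ * η / h ^ 2) +
        (a * h / (2 * d)) * (Real.exp (-4 * d * τ * η / h ^ 2) - 1)) ^ 2 +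
      (a ^ 2 * h ^ 2 * (1 - η) / (4 * d ^ 2 * η)) *
        (Real.exp (-4 * d * τ * η / h ^ 2) - 1) ^ 2 ≤ 1 := by
  have hneg : -4 * d * τ * η / h ^ 2 = -(4 * d * τ * η / h ^ 2) := by ring
  rw [hneg]
  set E := Real.exp (-(4 * d * τ * η / h ^ 2)) with hE
  have hE0 : 0 < E := Real.exp_pos _
  have hE1 : E ≤ 1 := by
    rw [hE]
    have h0 : -(4 * d * τ * η / h ^ 2) ≤ 0 := by
      have : 0 ≤ 4 * d * τ * η / h ^ 2 := by positivity
      linarith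
    calc Real.exp (-(4 * d * τ * η / h ^ 2)) ≤ Real.exp 0 := Real.exp_le_exp.mpr h0
      _ = 1 := Real.exp_zero
  -- key inequality
  have hkey : (1 - E) * (4*d^2*η + 4*d*η*(a*h) + (a*h)^2) ≤ 8*d^2*η + 4*d*η*(a*h) := by
    rcases le_max_iff.mp hτ with hA | hB
    · rcases le_or_gt ((a*h)^2) (4*d^2*η) with hc | hc
      · have hF : 0 ≤ 4*d^2*η + 4*d*η*(a*h) + (a*h)^2 := by positivity
        nlinarith [hE0, hE1]
      · -- τ ≤ 2d/a², use pade2 with B = (ah)²/2, M = 4d²η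
        have hcond : (4 * d * τ * η / h ^ 2) * ((a*h)^2/2) ≤ 4*d^2*η := by
          have hτa : τ * a^2 ≤ 2*d := (le_div_iff₀ (by positivity)).mp hA
          have heq : (4 * d * τ * η / h ^ 2) * ((a*h)^2/2) = 2*d*η*(τ*a^2) := by
            field_simp; ring
          rw [heq]
          nlinarith [mul_le_mul_of_nonneg_left hτa (show (0:ℝ) ≤ 2*d*η by positivity)]
        have hp := pade2 (4 * d * τ * η / h ^ 2) ((a*h)^2/2) (4*d^2*η)
          (by positivity) (by positivity) hcond
        -- hp : ((a*h)^2 + 4d²η)(1-E) ≤ 8d²η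
        have hA0 : 0 ≤ 8*d^2*η - (1-E) * ((a*h)^2 + 4*d^2*η) := by nlinarith [hp]
        have hF : (0:ℝ) ≤ 4*d^2*η + 4*d*η*(a*h) + (a*h)^2 := by positivity
        nlinarith [mul_nonneg hA0 hF,
          mul_nonneg (show (0:ℝ) ≤ 4*d*η*(a*h) by positivity) (by linarith : (0:ℝ) ≤ (a*h)^2 - 4*d^2*η),
          (show (0:ℝ) < (a*h)^2 + 4*d^2*η by positivity)]
    · -- τ ≤ h/a, use pade2 with B = ah/2, M = 2dη
      have hcond : (4 * d * τ * η / h ^ 2) * ((a*h)/2) ≤ 2*d*η := by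
        have hτa : τ * a ≤ h := (le_div_iff₀ ha).mp hB
        have heq : (4 * d * τ * η / h ^ 2) * ((a*h)/2) = 2*d*η*(τ*a)/h := by
          field_simp; ring
        rw [heq, div_le_iff₀ hh]
        nlinarith [mul_le_mul_of_nonneg_left hτa (show (0:ℝ) ≤ 2*d*η by positivity)]
      have hp := pade2 (4 * d * τ * η / h ^ 2) ((a*h)/2) (2*d*η)
        (by positivity) (by positivity) hcond
      -- hp : (ah + 2dη)(1-E) ≤ 4dη
      have hA0 : 0 ≤ 4*d*η - (1-E) * ((a*h) + 2*d*η) := by nlinarith [hp]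
      have hF : (0:ℝ) ≤ 4*d^2*η + 4*d*η*(a*h) + (a*h)^2 := by positivity
      nlinarith [mul_nonneg hA0 hF,
        mul_nonneg (show (0:ℝ) ≤ 8*d^2*η*(a*h) by positivity) (by linarith : (0:ℝ) ≤ 1 - η),
        (show (0:ℝ) < (a*h) + 2*d*η by positivity)]
  -- conclude
  rw [← sub_nonneg]
  have hexpand : (1 - ((E + (a * h / (2 * d)) * (E - 1)) ^ 2 +
      (a ^ 2 * h ^ 2 * (1 - η) / (4 * d ^ 2 * η)) * (E - 1) ^ 2)) * (4*d^2*η) =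
      (8*d^2*η + 4*d*η*(a*h)) * (1-E) - (1-E)^2 * (4*d^2*η + 4*d*η*(a*h) + (a*h)^2) := by
    field_simp
    ring
  have hmul := mul_le_mul_of_nonneg_left hkey (by linarith : (0:ℝ) ≤ 1 - E)
  have h2 : 0 ≤ (1 - ((E + (a * h / (2 * d)) * (E - 1)) ^ 2 +
      (a ^ 2 * h ^ 2 * (1 - η) / (4 * d ^ 2 * η)) * (E - 1) ^ 2)) * (4*d^2*η) := by
    rw [hexpand]; nlinarith [hmul]
  nlinarith [h2, (show (0:ℝ) < 4*d^2*η by positivity)]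
end

section
/- For every τ > 2, there exists η > 0 such that Q̂(τ,η) > 1, where Q̂(τ,η) = exp(−2τη) + (1/η)·(exp(−τη) − 1)². Hence the condition τ ≤ 2 is necessary for the growth-factor bound Q̂(τ,η) ≤ 1 to hold for all η > 0. -/
/-- Necessity of the time-step constraint `τ ≤ 2` for the semidiscrete ETD-RK1
scheme: for every `τ > 2` there exists `η > 0` with
`Q̂(τ,η) = exp(−2τη) + (1/η)·(exp(−τη) − 1)² > 1`. -/
theorem etdrk1_semidiscrete_instability (τ : ℝ) (hτ : 2 < τ) :
    ∃ η : ℝ, 0 < η ∧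
      1 < Real.exp (-2 * τ * η) + (1 / η) * (Real.exp (-τ * η) - 1) ^ 2 := by
  have hτ0 : (0:ℝ) < τ := by linarith
  set s := Real.sqrt (τ/2) with hs
  have hs2 : s^2 = τ/2 := Real.sq_sqrt (by linarith)
  have hs0 : 0 ≤ s := Real.sqrt_nonneg _
  have hs1 : 1 < s := by nlinarith
  set x := (s - 1)/2 with hx
  have hx0 : 0 < x := by simp only [hx]; linarith
  refine ⟨x/τ, by positivity, ?_⟩
  have hη : τ * (x/τ) = x := by field_simp
  have h1x : (0:ℝ) < 1 + x := by linarith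
  -- bound for exp(-2x)
  have h1 : 1 - 2*x ≤ Real.exp (-2*τ*(x/τ)) := by
    have h := Real.add_one_le_exp (-2*x)
    have he : -2*τ*(x/τ) = -2*x := by field_simp
    rw [he]; linarith
  -- bound exp(-x) ≤ 1/(1+x)
  have h2 : Real.exp (-(τ*(x/τ))) ≤ 1/(1+x) := by
    rw [hη, Real.exp_neg, one_div]
    exact inv_anti₀ h1x (by linarith [Real.add_one_le_exp x])
  have h2' : Real.exp (-τ*(x/τ)) ≤ 1/(1+x) := by
    rw [show -τ*(x/τ) = -(τ*(x/τ)) by ring]; exact h2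
  -- lower bound on the square
  have hq : (x/(1+x))^2 ≤ (Real.exp (-τ*(x/τ)) - 1)^2 := by
    have hle : Real.exp (-τ*(x/τ)) - 1 ≤ -(x/(1+x)) := by
      have : 1/(1+x) - 1 = -(x/(1+x)) := by field_simp; ring
      linarith [h2', this.ge, this.le]
    have hnn : 0 ≤ x/(1+x) := by positivity
    nlinarith [sq_nonneg (Real.exp (-τ*(x/τ)) - 1 + x/(1+x))]
  -- the weighted square term
  have hw : 2*x < (1/(x/τ)) * (x/(1+x))^2 := by
    have hxτ : (1/(x/τ)) * (x/(1+x))^2 = τ*x/(1+x)^2 := by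
      field_simp
    rw [hxτ]
    have hkey : 2*(1+x)^2 < τ := by
      have h4 : (1+x) = (s+1)/2 := by rw [hx]; ring
      have : (1+x)^2 < s^2 := by
        rw [h4]; nlinarith
      nlinarith
    rw [lt_div_iff₀ (by positivity)]
    nlinarith
  have hsq : 0 ≤ (x/(1+x))^2 := by positivity
  have hpos : 0 < 1/(x/τ) := by positivity
  have : (1/(x/τ)) * (x/(1+x))^2 ≤ (1/(x/τ)) * (Real.exp (-τ*(x/τ)) - 1)^2 :=
    mul_le_mul_of_nonneg_left hq (le_of_lt hpos)
  linarith
end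

section
/- For every τ with 0 < τ ≤ 2, every h > 0, and every η ∈ [0,1], one has 1 + (4τ²/h²)·η(1−η) ≤ (1 + (4τ/h²)·η)²; equivalently, the squared growth-factor modulus Q_ic(τ,h,η) := (1 + (4τ²/h²)η(1−η)) / (1 + (4τ/h²)η)² is at most 1. (This is the stability of the first-order IMEX-RK (ARS(1,1,1)) time discretization of the central finite-difference scheme for the dimensionless advection–diffusion equation under τ ≤ 2.) -/
/-- Stability of the first-order IMEX-RK (ARS(1,1,1)) time discretization of the
central finite-difference scheme for the dimensionless advection–diffusion
equation under `τ ≤ 2`: for all `h > 0` and `η ∈ [0,1]`,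
`1 + (4τ²/h²)·η(1−η) ≤ (1 + (4τ/h²)·η)²`. -/
theorem imexrk1_central_stability
    (τ h η : ℝ) (hτ0 : 0 < τ) (hτ2 : τ ≤ 2) (hh : 0 < h)
    (hη0 : 0 ≤ η) (hη1 : η ≤ 1) :
    1 + (4 * τ ^ 2 / h ^ 2) * (η * (1 - η)) ≤ (1 + (4 * τ / h ^ 2) * η) ^ 2 := by
  have hh2 : (0:ℝ) < h ^ 2 := by positivity
  rw [div_mul_eq_mul_div, div_mul_eq_mul_div, ← sub_nonneg]
  have key : 0 ≤ (4 * τ * η / h ^ 2) * (2 - τ * (1 - η) + 4 * τ * η / h ^ 2) := by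
    have h1 : 0 ≤ 4 * τ * η / h ^ 2 := by positivity
    have h2 : τ * (1 - η) ≤ 2 := by nlinarith
    nlinarith
  have eq : (1 + 4 * τ * η / h ^ 2) ^ 2 - (1 + 4 * τ ^ 2 * (η * (1 - η)) / h ^ 2)
      = (4 * τ * η / h ^ 2) * (2 - τ * (1 - η) + 4 * τ * η / h ^ 2) := by
    field_simp
    ring
  linarith [key, eq.ge]
end

section
/- For every h > 0, every τ with 0 < τ ≤ 2 + h, and every η ∈ [0,1], one has (1 − (2τ/h)η)² + (4τ²/h²)·η(1−η) ≤ (1 + (4τ/h²)·η)²; equivalently, the squared growth-factor modulus Q_iu(τ,h,η) := ((1 − (2τ/h)η)² + (4τ²/h²)η(1−η)) / (1 + (4τ/h²)η)² is at most 1. (This is the stability of the first-order IMEX-RK (ARS(1,1,1)) time discretization of the upwind finite-difference scheme for the dimensionless advection–diffusion equation under τ ≤ 2 + h.) -/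
/-- Stability of the first-order IMEX-RK (ARS(1,1,1)) time discretization of the
upwind finite-difference scheme for the dimensionless advection–diffusion
equation under `τ ≤ 2 + h`: for all `h > 0` and `η ∈ [0,1]`,
`(1 − (2τ/h)η)² + (4τ²/h²)·η(1−η) ≤ (1 + (4τ/h²)·η)²`. -/
theorem imexrk1_upwind_stability
    (τ h η : ℝ) (hh : 0 < h) (hτ0 : 0 < τ) (hτ : τ ≤ 2 + h)
    (hη0 : 0 ≤ η) (hη1 : η ≤ 1) :
    (1 - (2 * τ / h) * η) ^ 2 + (4 * τ ^ 2 / h ^ 2) * (η * (1 - η)) ≤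
      (1 + (4 * τ / h ^ 2) * η) ^ 2 := by
  rw [← sub_nonneg]
  have hkey : (1 + (4 * τ / h ^ 2) * η) ^ 2 -
      ((1 - (2 * τ / h) * η) ^ 2 + (4 * τ ^ 2 / h ^ 2) * (η * (1 - η)))
      = (4 * τ * η / h ^ 4) * (h ^ 2 * (2 + h - τ) + 4 * τ * η) := by
    field_simp
    ring
  rw [hkey]
  have : 0 ≤ 2 + h - τ := by linarith
  positivity
end

section
/- Let a > 0 and d > 0. For every τ with 0 < τ ≤ 2d/a², every h > 0, and every η ∈ [0,1], one has 1 + (4a²τ²/h²)·η(1−η) ≤ (1 + (4dτ/h²)·η)². (This is the stability of the first-order IMEX-RK central finite-difference scheme for u_t + a u_x = d u_{xx} under the time-step constraint τ ≤ 2d/a².) -/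
/-- Stability of the first-order IMEX-RK central finite-difference scheme for
`u_t + a u_x = d u_{xx}` (`a, d > 0`) under the time-step constraint `τ ≤ 2d/a²`:
for all `h > 0` and `η ∈ [0,1]`,
`1 + (4a²τ²/h²)·η(1−η) ≤ (1 + (4dτ/h²)·η)²`. -/
theorem imexrk1_central_stability_general
    (a d τ h η : ℝ) (ha : 0 < a) (hd : 0 < d)
    (hτ0 : 0 < τ) (hτ : τ ≤ 2 * d / a ^ 2) (hh : 0 < h)
    (hη0 : 0 ≤ η) (hη1 : η ≤ 1) :
    1 + (4 * a ^ 2 * τ ^ 2 / h ^ 2) * (η * (1 - η)) ≤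
      (1 + (4 * d * τ / h ^ 2) * η) ^ 2 := by
  have h2 : 0 < h ^ 2 := by positivity
  have ha2 : a ^ 2 * τ ≤ 2 * d := by
    rw [le_div_iff₀ (by positivity : (0:ℝ) < a ^ 2)] at hτ
    linarith [hτ]
  have key : 4 * a ^ 2 * τ ^ 2 * (η * (1 - η)) ≤ 8 * d * τ * η := by
    nlinarith [mul_nonneg hη0 hτ0.le, mul_nonneg (mul_nonneg hη0 hη0) hτ0.le,
      mul_nonneg (mul_nonneg hη0 hτ0.le) (sub_nonneg.2 hη1)]
  have hsq : (0:ℝ) ≤ (4 * d * τ / h ^ 2 * η) ^ 2 := sq_nonneg _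
  rw [add_sq]
  have : 4 * a ^ 2 * τ ^ 2 / h ^ 2 * (η * (1 - η)) ≤ 2 * (4 * d * τ / h ^ 2 * η) := by
    rw [div_mul_eq_mul_div, div_le_iff₀ h2]
    have : 2 * (4 * d * τ / h ^ 2 * η) * h ^ 2 = 8 * d * τ * η := by
      field_simp; ring
    rw [this]; exact key
  nlinarith [this, hsq]
end

section
/- Let a > 0 and d > 0. For every h > 0, every τ with 0 < τ ≤ 2d/a² + h/a, and every η ∈ [0,1], one has (1 − (2aτ/h)η)² + (4a²τ²/h²)·η(1−η) ≤ (1 + (4dτ/h²)·η)². (This is the stability of the first-order IMEX-RK upwind finite-difference scheme for u_t + a u_x = d u_{xx} under the time-step constraint τ ≤ 2d/a² + h/a.) -/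
/-- Stability of the first-order IMEX-RK upwind finite-difference scheme for
`u_t + a u_x = d u_{xx}` (`a, d > 0`) under the time-step constraint
`τ ≤ 2d/a² + h/a`: for all `h > 0` and `η ∈ [0,1]`,
`(1 − (2aτ/h)η)² + (4a²τ²/h²)·η(1−η) ≤ (1 + (4dτ/h²)·η)²`. -/
theorem imexrk1_upwind_stability_general
    (a d τ h η : ℝ) (ha : 0 < a) (hd : 0 < d) (hh : 0 < h)
    (hτ0 : 0 < τ) (hτ : τ ≤ 2 * d / a ^ 2 + h / a)
    (hη0 : 0 ≤ η) (hη1 : η ≤ 1) :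
    (1 - (2 * a * τ / h) * η) ^ 2 + (4 * a ^ 2 * τ ^ 2 / h ^ 2) * (η * (1 - η)) ≤
      (1 + (4 * d * τ / h ^ 2) * η) ^ 2 := by
  have key : a ^ 2 * τ ≤ 2 * d + a * h := by
    have h1 : a ^ 2 * τ ≤ a ^ 2 * (2 * d / a ^ 2 + h / a) :=
      mul_le_mul_of_nonneg_left hτ (by positivity)
    have : a ^ 2 * (2 * d / a ^ 2 + h / a) = 2 * d + a * h := by
      field_simp
    linarith [this ▸ h1]
  rw [← sub_nonneg]
  have expand : (1 + 4 * d * τ / h ^ 2 * η) ^ 2 -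
      ((1 - 2 * a * τ / h * η) ^ 2 + 4 * a ^ 2 * τ ^ 2 / h ^ 2 * (η * (1 - η))) =
      (4 * τ * η / h ^ 2) * (2 * d + a * h - a ^ 2 * τ) + 16 * d ^ 2 * τ ^ 2 * η ^ 2 / h ^ 4 := by
    field_simp
    ring
  rw [expand]
  have t1 : 0 ≤ (4 * τ * η / h ^ 2) * (2 * d + a * h - a ^ 2 * τ) :=
    mul_nonneg (by positivity) (by linarith)
  have t2 : 0 ≤ 16 * d ^ 2 * τ ^ 2 * η ^ 2 / h ^ 4 := by positivity
  linarith
end
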